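/- Let T be a Tychonoff (T3.5) topological space and let ξ : 𝒫(ℂ) → [0,∞] satisfy (MN1)–(MN6). Then the functional Ω : 𝒫(C^b(T)) → [0,∞] defined by Ω(ℱ) := ω(ℱ) + η(ℱ) satisfies all axioms (MN1)–(MN6); in particular, Ω(ℱ) = 0 if and only if ℱ is relatively compact in C^b(T), so Ω is a measure of non-compactness on C^b(T). -/

import Mathlib

open BoundedContinuousFunction ENNReal Pointwise

variable {T : Type*} [TopologicalSpace T]

/-- `ω^u(ℱ, W) := sup { |f̂(u) − f(t)| : f ∈ ℱ, t ∈ T, φ(t) ∈ W } ∈ [0,∞]`, where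
`hat f = f̂` is the continuous extension of `f` to the Stone–Čech compactification. -/
noncomputable def omegaUW (hat : BoundedContinuousFunction T ℂ → C(StoneCech T, ℂ))
    (ℱ : Set (BoundedContinuousFunction T ℂ)) (u : StoneCech T) (W : Set (StoneCech T)) :
    ℝ≥0∞ :=
  ⨆ f ∈ ℱ, ⨆ t ∈ (stoneCechUnit ⁻¹' W : Set T), (‖hat f u - f t‖₊ : ℝ≥0∞)

/-- `ω^u(ℱ) := inf { ω^u(ℱ, W) : W ⊆ βT open, u ∈ W }`. -/
noncomputable def omegaU (hat : BoundedContinuousFunction T ℂ → C(StoneCech T, ℂ))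
    (ℱ : Set (BoundedContinuousFunction T ℂ)) (u : StoneCech T) : ℝ≥0∞ :=
  ⨅ (W : Set (StoneCech T)) (_ : IsOpen W ∧ u ∈ W), omegaUW hat ℱ u W

/-- `ω(ℱ) := sup_{u ∈ βT} ω^u(ℱ)`, the measure of non-ω-equicontinuity. -/
noncomputable def omegaMeasure (hat : BoundedContinuousFunction T ℂ → C(StoneCech T, ℂ))
    (ℱ : Set (BoundedContinuousFunction T ℂ)) : ℝ≥0∞ :=
  ⨆ u : StoneCech T, omegaU hat ℱ u

section Aux

variable {hat : BoundedContinuousFunction T ℂ → C(StoneCech T, ℂ)}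

lemma hat_eq (hhat : ∀ f : BoundedContinuousFunction T ℂ, ∀ t : T, hat f (stoneCechUnit t) = f t)
    (f : BoundedContinuousFunction T ℂ) (g : C(StoneCech T, ℂ))
    (h : ∀ t : T, g (stoneCechUnit t) = f t) (u : StoneCech T) : hat f u = g u := by
  have h2 : ⇑(hat f) = ⇑g := by
    refine Continuous.ext_on denseRange_stoneCechUnit (hat f).continuous g.continuous ?_
    rintro _ ⟨t, rfl⟩
    rw [hhat, h]
  exact congrFun h2 u

lemma hat_add (hhat : ∀ f : BoundedContinuousFunction T ℂ, ∀ t : T, hat f (stoneCechUnit t) = f t)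
    (f g : BoundedContinuousFunction T ℂ) (u : StoneCech T) :
    hat (f + g) u = hat f u + hat g u :=
  hat_eq hhat (f + g) (hat f + hat g) (by intro t; simp [hhat]) u

lemma hat_smulc (hhat : ∀ f : BoundedContinuousFunction T ℂ, ∀ t : T, hat f (stoneCechUnit t) = f t)
    (c : ℂ) (f : BoundedContinuousFunction T ℂ) (u : StoneCech T) :
    hat (c • f) u = c * hat f u :=
  hat_eq hhat (c • f) (c • hat f) (by intro t; simp [hhat]) u

lemma hat_smulr (hhat : ∀ f : BoundedContinuousFunction T ℂ, ∀ t : T, hat f (stoneCechUnit t) = f t)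
    (r : ℝ) (f : BoundedContinuousFunction T ℂ) (u : StoneCech T) :
    hat (r • f) u = r • hat f u :=
  hat_eq hhat (r • f) (r • hat f) (by intro t; simp [hhat]) u

lemma norm_hat_le (hhat : ∀ f : BoundedContinuousFunction T ℂ, ∀ t : T, hat f (stoneCechUnit t) = f t)
    (f : BoundedContinuousFunction T ℂ) (u : StoneCech T) : ‖hat f u‖ ≤ ‖f‖ := by
  have hcl : IsClosed {w : StoneCech T | ‖hat f w‖ ≤ ‖f‖} :=
    isClosed_le (hat f).continuous.norm continuous_const
  have hsub : Set.range (stoneCechUnit : T → StoneCech T) ⊆ {w | ‖hat f w‖ ≤ ‖f‖} := by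
    rintro _ ⟨t, rfl⟩
    simp only [Set.mem_setOf_eq, hhat]
    exact f.norm_coe_le_norm t
  exact closure_minimal hsub hcl (denseRange_stoneCechUnit u)

lemma norm_hat_sub_hat_le
    (hhat : ∀ f : BoundedContinuousFunction T ℂ, ∀ t : T, hat f (stoneCechUnit t) = f t)
    (f g : BoundedContinuousFunction T ℂ) (u : StoneCech T) :
    ‖hat f u - hat g u‖ ≤ dist f g := by
  have h1 : hat (f - g) u = hat f u - hat g u :=
    hat_eq hhat (f - g) (hat f - hat g) (by intro t; simp [hhat]) u
  rw [← h1, dist_eq_norm]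
  exact norm_hat_le hhat (f - g) u

end Aux
section Aux2

variable {hat : BoundedContinuousFunction T ℂ → C(StoneCech T, ℂ)}
variable {ℱ 𝒢 : Set (BoundedContinuousFunction T ℂ)} {u : StoneCech T} {W W' : Set (StoneCech T)}

lemma enn_le {x : ℂ} {c : ℝ} (h : ‖x‖ ≤ c) : (‖x‖₊ : ℝ≥0∞) ≤ ENNReal.ofReal c := by
  rw [← enorm_eq_nnnorm, ← ofReal_norm]
  exact ENNReal.ofReal_le_ofReal h

lemma coe_le_omegaUW {f : BoundedContinuousFunction T ℂ} {t : T}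
    (hf : f ∈ ℱ) (ht : stoneCechUnit t ∈ W) :
    (‖hat f u - f t‖₊ : ℝ≥0∞) ≤ omegaUW hat ℱ u W :=
  le_iSup₂_of_le f hf (le_iSup₂_of_le t ht le_rfl)

lemma omegaUW_le {c : ℝ≥0∞}
    (h : ∀ f ∈ ℱ, ∀ t : T, stoneCechUnit t ∈ W → (‖hat f u - f t‖₊ : ℝ≥0∞) ≤ c) :
    omegaUW hat ℱ u W ≤ c :=
  iSup₂_le fun f hf => iSup₂_le fun t ht => h f hf t ht

lemma omegaUW_mono (h : ℱ ⊆ 𝒢) : omegaUW hat ℱ u W ≤ omegaUW hat 𝒢 u W :=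
  omegaUW_le fun f hf t ht => coe_le_omegaUW (h hf) ht

lemma omegaUW_mono_W (h : W ⊆ W') : omegaUW hat ℱ u W ≤ omegaUW hat ℱ u W' :=
  omegaUW_le fun f hf t ht => coe_le_omegaUW hf (h ht)

lemma omegaU_le (hW : IsOpen W) (hu : u ∈ W) : omegaU hat ℱ u ≤ omegaUW hat ℱ u W :=
  iInf₂_le W ⟨hW, hu⟩

lemma omegaU_mono (h : ℱ ⊆ 𝒢) : omegaU hat ℱ u ≤ omegaU hat 𝒢 u :=
  le_iInf₂ fun W hW => le_trans (iInf₂_le W hW) (omegaUW_mono h)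

lemma omegaMeasure_mono (h : ℱ ⊆ 𝒢) : omegaMeasure hat ℱ ≤ omegaMeasure hat 𝒢 :=
  iSup_mono fun _ => omegaU_mono h

lemma omegaUW_closure
    (hhat : ∀ f : BoundedContinuousFunction T ℂ, ∀ t : T, hat f (stoneCechUnit t) = f t)
    (ℱ : Set (BoundedContinuousFunction T ℂ)) (u : StoneCech T) (W : Set (StoneCech T)) :
    omegaUW hat (closure ℱ) u W = omegaUW hat ℱ u W := by
  refine le_antisymm ?_ (omegaUW_mono subset_closure)
  refine omegaUW_le fun g hg t ht => ?_
  by_cases hM : omegaUW hat ℱ u W = ⊤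
  · rw [hM]; exact le_top
  refine ENNReal.le_of_forall_pos_le_add fun ε hε _ => ?_
  obtain ⟨f, hf, hdist⟩ := Metric.mem_closure_iff.1 hg ((ε : ℝ) / 2) (by positivity)
  have h1 : ‖hat g u - g t‖ ≤ ‖hat f u - f t‖ + (ε : ℝ) := by
    have e1 : ‖hat g u - hat f u‖ ≤ dist g f := norm_hat_sub_hat_le hhat g f u
    have e2 : ‖f t - g t‖ ≤ dist g f := by
      rw [← dist_eq_norm, dist_comm]
      exact (BoundedContinuousFunction.dist_coe_le_dist t).trans le_rfl
    have e3 : ‖hat g u - g t‖ ≤ ‖hat g u - hat f u‖ + ‖hat f u - f t‖ + ‖f t - g t‖ := by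
      have := norm_add₃_le (a := hat g u - hat f u) (b := hat f u - f t) (c := f t - g t)
      simpa using this
    have hε2 : 0 < (ε : ℝ) := hε
    linarith
  calc (‖hat g u - g t‖₊ : ℝ≥0∞) ≤ ENNReal.ofReal (‖hat f u - f t‖ + (ε : ℝ)) := enn_le h1
    _ = (‖hat f u - f t‖₊ : ℝ≥0∞) + (ε : ℝ≥0∞) := by
        rw [ENNReal.ofReal_add (norm_nonneg _) ε.coe_nonneg, ofReal_norm, enorm_eq_nnnorm,
          ENNReal.ofReal_coe_nnreal]
    _ ≤ omegaUW hat ℱ u W + (ε : ℝ≥0∞) := add_le_add_left (coe_le_omegaUW hf ht) _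

lemma exists_W_finite
    (hhat : ∀ f : BoundedContinuousFunction T ℂ, ∀ t : T, hat f (stoneCechUnit t) = f t)
    (h𝒢 : 𝒢.Finite) (u : StoneCech T) {δ : ℝ} (hδ : 0 < δ) :
    ∃ W, IsOpen W ∧ u ∈ W ∧ omegaUW hat 𝒢 u W ≤ ENNReal.ofReal δ := by
  refine ⟨⋂ g ∈ 𝒢, (hat g) ⁻¹' Metric.ball (hat g u) δ, ?_, ?_, ?_⟩
  · exact h𝒢.isOpen_biInter fun g _ => Metric.isOpen_ball.preimage (hat g).continuous
  · exact Set.mem_iInter₂.2 fun g _ => by simp [Metric.mem_ball, hδ]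
  · refine omegaUW_le fun g hg t ht => ?_
    have h2 := Set.mem_iInter₂.1 ht g hg
    rw [Set.mem_preimage, Metric.mem_ball] at h2
    refine enn_le ?_
    rw [← hhat g t, ← dist_eq_norm, dist_comm]
    exact h2.le

end Aux2
section Aux3

variable {hat : BoundedContinuousFunction T ℂ → C(StoneCech T, ℂ)}
variable {ℱ 𝒢 : Set (BoundedContinuousFunction T ℂ)} {u : StoneCech T} {W : Set (StoneCech T)}

lemma omegaUW_union :
    omegaUW hat (ℱ ∪ 𝒢) u W = omegaUW hat ℱ u W ⊔ omegaUW hat 𝒢 u W := by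
  simp only [omegaUW]
  exact iSup_union

lemma omegaU_union
    (hhat : ∀ f : BoundedContinuousFunction T ℂ, ∀ t : T, hat f (stoneCechUnit t) = f t)
    (h𝒢 : 𝒢.Finite) (u : StoneCech T) :
    omegaU hat (ℱ ∪ 𝒢) u = omegaU hat ℱ u := by
  refine le_antisymm ?_ (omegaU_mono Set.subset_union_left)
  refine ENNReal.le_of_forall_pos_le_add fun ε hε hlt => ?_
  have h1 : omegaU hat ℱ u < omegaU hat ℱ u + ε :=
    ENNReal.lt_add_right hlt.ne (by exact_mod_cast hε.ne')
  have h2 : ⨅ (W : Set (StoneCech T)) (_ : IsOpen W ∧ u ∈ W), omegaUW hat ℱ u W <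
      omegaU hat ℱ u + ε := h1
  rw [iInf_lt_iff] at h2
  obtain ⟨W1, h2⟩ := h2
  rw [iInf_lt_iff] at h2
  obtain ⟨hW1, hlt1⟩ := h2
  obtain ⟨W2, hW2o, hW2u, hle2⟩ := exists_W_finite hhat h𝒢 u (δ := (ε : ℝ)) hε
  rw [ENNReal.ofReal_coe_nnreal] at hle2
  calc omegaU hat (ℱ ∪ 𝒢) u ≤ omegaUW hat (ℱ ∪ 𝒢) u (W1 ∩ W2) :=
        omegaU_le (hW1.1.inter hW2o) ⟨hW1.2, hW2u⟩
    _ = omegaUW hat ℱ u (W1 ∩ W2) ⊔ omegaUW hat 𝒢 u (W1 ∩ W2) := omegaUW_union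
    _ ≤ (omegaU hat ℱ u + ε) ⊔ (ε : ℝ≥0∞) :=
        sup_le_sup ((omegaUW_mono_W Set.inter_subset_left).trans hlt1.le)
          ((omegaUW_mono_W Set.inter_subset_right).trans hle2)
    _ ≤ omegaU hat ℱ u + ε := sup_le le_rfl le_add_self

lemma omegaUW_smul
    (hhat : ∀ f : BoundedContinuousFunction T ℂ, ∀ t : T, hat f (stoneCechUnit t) = f t)
    (l : ℂ) (ℱ : Set (BoundedContinuousFunction T ℂ)) (u : StoneCech T) (W : Set (StoneCech T)) :
    omegaUW hat (l • ℱ) u W = (‖l‖₊ : ℝ≥0∞) * omegaUW hat ℱ u W := by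
  have key : ∀ f : BoundedContinuousFunction T ℂ, ∀ t : T,
      (‖hat (l • f) u - (l • f) t‖₊ : ℝ≥0∞) = (‖l‖₊ : ℝ≥0∞) * (‖hat f u - f t‖₊ : ℝ≥0∞) := by
    intro f t
    rw [hat_smulc hhat, BoundedContinuousFunction.coe_smul]
    simp only [smul_eq_mul]
    rw [← mul_sub, nnnorm_mul, ENNReal.coe_mul]
  rw [omegaUW, ← Set.image_smul, iSup_image]
  simp only [omegaUW, ENNReal.mul_iSup]
  exact iSup_congr fun f => iSup_congr fun _ => iSup_congr fun t => iSup_congr fun _ => key f t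

lemma omegaU_smul
    (hhat : ∀ f : BoundedContinuousFunction T ℂ, ∀ t : T, hat f (stoneCechUnit t) = f t)
    (l : ℂ) (ℱ : Set (BoundedContinuousFunction T ℂ)) (u : StoneCech T) :
    omegaU hat (l • ℱ) u = (‖l‖₊ : ℝ≥0∞) * omegaU hat ℱ u := by
  simp only [omegaU, omegaUW_smul hhat]
  rw [iInf_subtype', iInf_subtype']
  exact (ENNReal.mul_iInf' (fun h => absurd h ENNReal.coe_ne_top)
    (fun _ => ⟨⟨Set.univ, isOpen_univ, trivial⟩⟩)).symm

lemma omegaMeasure_smul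
    (hhat : ∀ f : BoundedContinuousFunction T ℂ, ∀ t : T, hat f (stoneCechUnit t) = f t)
    (l : ℂ) (ℱ : Set (BoundedContinuousFunction T ℂ)) :
    omegaMeasure hat (l • ℱ) = (‖l‖₊ : ℝ≥0∞) * omegaMeasure hat ℱ := by
  simp only [omegaMeasure, omegaU_smul hhat, ENNReal.mul_iSup]

lemma coe_nnnorm_le_iff {x : ℂ} {M : ℝ≥0∞} (hM : M ≠ ⊤) :
    (‖x‖₊ : ℝ≥0∞) ≤ M ↔ ‖x‖ ≤ M.toReal := by
  rw [← enorm_eq_nnnorm, ← ofReal_norm, ENNReal.ofReal_le_iff_le_toReal hM]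

lemma omegaUW_convexHull
    (hhat : ∀ f : BoundedContinuousFunction T ℂ, ∀ t : T, hat f (stoneCechUnit t) = f t)
    (ℱ : Set (BoundedContinuousFunction T ℂ)) (u : StoneCech T) (W : Set (StoneCech T)) :
    omegaUW hat (convexHull ℝ ℱ) u W = omegaUW hat ℱ u W := by
  refine le_antisymm ?_ (omegaUW_mono (subset_convexHull ℝ ℱ))
  by_cases hM : omegaUW hat ℱ u W = ⊤
  · rw [hM]; exact le_top
  refine omegaUW_le fun h hh t ht => ?_
  set Φ : BoundedContinuousFunction T ℂ →ₗ[ℝ] ℂ :=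
    { toFun := fun f => hat f u - f t
      map_add' := fun f g => by
        show hat (f + g) u - (f + g) t = (hat f u - f t) + (hat g u - g t)
        rw [hat_add hhat]
        simp only [BoundedContinuousFunction.coe_add, Pi.add_apply]
        ring
      map_smul' := fun r f => by
        show hat (r • f) u - (r • f) t = r • (hat f u - f t)
        rw [hat_smulr hhat]
        simp only [BoundedContinuousFunction.coe_smul, Pi.smul_apply, smul_eq_mul,
          Complex.real_smul, RingHom.id_apply]
        push_cast
        ring } with hΦ
  have hsub : Φ '' ℱ ⊆ Metric.closedBall 0 (omegaUW hat ℱ u W).toReal := by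
    rintro _ ⟨f, hf, rfl⟩
    rw [Metric.mem_closedBall, dist_zero_right]
    exact (coe_nnnorm_le_iff hM).1 (coe_le_omegaUW hf ht)
  have h2 : Φ h ∈ convexHull ℝ (Φ '' ℱ) := by
    rw [← Φ.image_convexHull]
    exact Set.mem_image_of_mem _ hh
  have h3 := convexHull_min hsub (convex_closedBall _ _) h2
  rw [Metric.mem_closedBall, dist_zero_right] at h3
  exact (coe_nnnorm_le_iff hM).2 h3

end Aux3
section Aux4

variable {hat : BoundedContinuousFunction T ℂ → C(StoneCech T, ℂ)}
variable {ℱ : Set (BoundedContinuousFunction T ℂ)}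

lemma omegaU_eq_zero_of_compact
    (hhat : ∀ f : BoundedContinuousFunction T ℂ, ∀ t : T, hat f (stoneCechUnit t) = f t)
    (hc : IsCompact (closure ℱ)) (u : StoneCech T) : omegaU hat ℱ u = 0 := by
  refine le_antisymm (ENNReal.le_of_forall_pos_le_add fun ε hε _ => ?_) (zero_le)
  rw [zero_add]
  have hεR : 0 < (ε : ℝ) / 3 := by positivity
  obtain ⟨S, hSfin, hScov⟩ := Metric.totallyBounded_iff.1
    (TotallyBounded.subset subset_closure hc.totallyBounded) ((ε : ℝ) / 3) hεR
  set W := ⋂ g ∈ S, (hat g) ⁻¹' Metric.ball (hat g u) ((ε : ℝ) / 3) with hW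
  have hWopen : IsOpen W := hSfin.isOpen_biInter fun g _ =>
    Metric.isOpen_ball.preimage (hat g).continuous
  have hWmem : u ∈ W := Set.mem_iInter₂.2 fun g _ => by simp [Metric.mem_ball, hεR]
  refine (omegaU_le hWopen hWmem).trans (omegaUW_le fun f hf t ht => ?_)
  obtain ⟨g, hgS, hfg⟩ : ∃ g ∈ S, f ∈ Metric.ball g ((ε : ℝ) / 3) := by
    simpa using hScov hf
  rw [Metric.mem_ball] at hfg
  have h1 : dist (hat f u) (hat g u) ≤ dist f g := by
    rw [dist_eq_norm]; exact norm_hat_sub_hat_le hhat f g u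
  have h2 : dist (hat g u) (g t) < (ε : ℝ) / 3 := by
    have h2' := Set.mem_iInter₂.1 ht g hgS
    rw [Set.mem_preimage, Metric.mem_ball] at h2'
    rw [← hhat g t, dist_comm]
    exact h2'
  have h3 : dist (g t) (f t) ≤ dist f g := by
    rw [dist_comm]
    exact BoundedContinuousFunction.dist_coe_le_dist t
  have h4 : dist (hat f u) (f t) ≤ dist (hat f u) (hat g u) + dist (hat g u) (g t) +
      dist (g t) (f t) := dist_triangle4 _ _ _ _
  have hd : dist f g < (ε : ℝ) / 3 := hfg
  have h5 : ‖hat f u - f t‖ ≤ (ε : ℝ) := by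
    rw [← dist_eq_norm]
    linarith
  have h6 : ‖hat f u - f t‖₊ ≤ ε := by
    rw [← NNReal.coe_le_coe, coe_nnnorm]
    exact h5
  exact ENNReal.coe_le_coe.2 h6

lemma totallyBounded_of_zero
    (hhat : ∀ f : BoundedContinuousFunction T ℂ, ∀ t : T, hat f (stoneCechUnit t) = f t)
    (hω : ∀ u, omegaU hat ℱ u = 0)
    (hη : ∀ t : T, IsCompact (closure ((fun f : BoundedContinuousFunction T ℂ => f t) '' ℱ))) :
    TotallyBounded ℱ := by
  by_cases hT : Nonempty T
  case neg =>
    have hsub : ℱ.Subsingleton := fun f _ g _ => by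
      ext t
      exact absurd ⟨t⟩ hT
    exact hsub.finite.totallyBounded
  rw [Metric.totallyBounded_iff]
  intro ε hε
  set δ : ℝ := ε / 6 with hδdef
  have hδ : 0 < δ := by positivity
  have hWex : ∀ u : StoneCech T, ∃ W, (IsOpen W ∧ u ∈ W) ∧
      omegaUW hat ℱ u W < ENNReal.ofReal δ := by
    intro u
    have h0 : ⨅ (W : Set (StoneCech T)) (_ : IsOpen W ∧ u ∈ W), omegaUW hat ℱ u W <
        ENNReal.ofReal δ := by
      have := hω u
      rw [omegaU] at this
      rw [this]
      exact ENNReal.ofReal_pos.2 hδ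
    rw [iInf_lt_iff] at h0
    obtain ⟨W, h0⟩ := h0
    rw [iInf_lt_iff] at h0
    obtain ⟨hP, hlt⟩ := h0
    exact ⟨W, hP, hlt⟩
  choose W hWP hWlt using hWex
  obtain ⟨s, hscov⟩ := isCompact_univ.elim_finite_subcover W (fun u => (hWP u).1)
    (fun v _ => Set.mem_iUnion.2 ⟨v, (hWP v).2⟩)
  have hrep : ∀ u : s, ∃ t : T, stoneCechUnit t ∈ W u :=
    fun u => denseRange_stoneCechUnit.exists_mem_open (hWP u).1 ⟨u, (hWP u).2⟩
  choose pt hpt using hrep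
  have hbound : ∀ h : BoundedContinuousFunction T ℂ, h ∈ ℱ → ∀ (u : StoneCech T) (x : T),
      stoneCechUnit x ∈ W u → dist (hat h u) (h x) < δ := by
    intro h hh u x hx
    have h1 : (‖hat h u - h x‖₊ : ℝ≥0∞) ≤ omegaUW hat ℱ u (W u) := coe_le_omegaUW hh hx
    have h2 := lt_of_le_of_lt h1 (hWlt u)
    rw [← enorm_eq_nnnorm, ← ofReal_norm] at h2
    rw [dist_eq_norm]
    exact (ENNReal.ofReal_lt_ofReal_iff_of_nonneg (norm_nonneg _)).1 h2
  set P : BoundedContinuousFunction T ℂ → (↥s → ℂ) :=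
    fun f u => f (pt u) with hPdef
  have hPsub : P '' ℱ ⊆ Set.univ.pi fun u : ↥s =>
      closure ((fun f : BoundedContinuousFunction T ℂ => f (pt u)) '' ℱ) := by
    rintro _ ⟨f, hf, rfl⟩ u _
    exact subset_closure (Set.mem_image_of_mem _ hf)
  have hPtb : TotallyBounded (P '' ℱ) :=
    TotallyBounded.subset hPsub (isCompact_univ_pi fun u => hη (pt u)).totallyBounded
  obtain ⟨N, hNsub, hNfin, hNcov⟩ := Metric.finite_approx_of_totallyBounded hPtb δ hδ
  have hNchoice : ∀ y ∈ N, ∃ f, f ∈ ℱ ∧ P f = y := fun y hy => by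
    obtain ⟨f, hf, hfy⟩ := hNsub hy
    exact ⟨f, hf, hfy⟩
  choose! g hg1 hg2 using hNchoice
  refine ⟨g '' N, hNfin.image _, fun f hf => ?_⟩
  obtain ⟨y, hy, hdy⟩ : ∃ y ∈ N, P f ∈ Metric.ball y δ := by
    simpa using hNcov (Set.mem_image_of_mem P hf)
  refine Set.mem_iUnion₂.2 ⟨g y, Set.mem_image_of_mem g hy, ?_⟩
  rw [Metric.mem_ball] at hdy ⊢
  have hgℱ : g y ∈ ℱ := hg1 y hy
  have hfc : ∀ u : ↥s, dist (f (pt u)) (g y (pt u)) < δ := by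
    intro u
    calc dist (f (pt u)) (g y (pt u)) = dist (P f u) (P (g y) u) := rfl
      _ ≤ dist (P f) (P (g y)) := dist_le_pi_dist _ _ u
      _ = dist (P f) y := by rw [hg2 y hy]
      _ < δ := hdy
  have hb5 : dist f (g y) ≤ 5 * δ := by
    refine (BoundedContinuousFunction.dist_le (by positivity)).2 fun x => ?_
    obtain ⟨u, hus, hxu⟩ : ∃ u ∈ s, stoneCechUnit x ∈ W u := by
      simpa using hscov (Set.mem_univ (stoneCechUnit x))
    set u' : ↥s := ⟨u, hus⟩ with hu'
    have d1 : dist (f x) (hat f u) < δ := by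
      rw [dist_comm]; exact hbound f hf u x hxu
    have d2 : dist (hat f u) (f (pt u')) < δ := hbound f hf u (pt u') (hpt u')
    have d3 : dist (f (pt u')) (g y (pt u')) < δ := hfc u'
    have d4 : dist (g y (pt u')) (hat (g y) u) < δ := by
      rw [dist_comm]; exact hbound _ hgℱ u (pt u') (hpt u')
    have d5 : dist (hat (g y) u) (g y x) < δ := hbound _ hgℱ u x hxu
    have e1 : dist (f x) (f (pt u')) ≤ dist (f x) (hat f u) + dist (hat f u) (f (pt u')) :=
      dist_triangle _ _ _
    have e2 : dist (g y (pt u')) (g y x) ≤ dist (g y (pt u')) (hat (g y) u) +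
        dist (hat (g y) u) (g y x) := dist_triangle _ _ _
    have e0 : dist (f x) (g y x) ≤ dist (f x) (f (pt u')) + dist (f (pt u')) (g y (pt u')) +
        dist (g y (pt u')) (g y x) := dist_triangle4 _ _ _ _
    linarith
  calc dist f (g y) ≤ 5 * δ := hb5
    _ < ε := by rw [hδdef]; linarith

end Aux4

/-- If `ξ` satisfies (MN1)–(MN6) on `𝒫(ℂ)`, then
`Ω(ℱ) := ω(ℱ) + η(ℱ)`, where `η(ℱ) := sup_{t ∈ T} ξ({f t : f ∈ ℱ})`,
satisfies (MN1)–(MN6) on `𝒫(C^b(T))`; in particular `Ω(ℱ) = 0` iff `ℱ` is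
relatively compact, so `Ω` is a measure of non-compactness on `C^b(T)`. -/
theorem Omega_is_measure_of_noncompactness [T35Space T]
    (hat : BoundedContinuousFunction T ℂ → C(StoneCech T, ℂ))
    (hhat : ∀ f : BoundedContinuousFunction T ℂ, ∀ t : T, hat f (stoneCechUnit t) = f t)
    (ξ : Set ℂ → ℝ≥0∞)
    (hξ1 : ∀ A : Set ℂ, ξ A = 0 ↔ IsCompact (closure A))
    (hξ2 : ∀ A B : Set ℂ, A ⊆ B → ξ A ≤ ξ B)
    (hξ3 : ∀ A : Set ℂ, ξ (closure A) = ξ A)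
    (hξ4 : ∀ (l : ℂ) (A : Set ℂ), ξ (l • A) = (‖l‖₊ : ℝ≥0∞) * ξ A)
    (hξ5 : ∀ A B : Set ℂ, B.Finite → Disjoint A B → ξ (A ∪ B) = ξ A)
    (hξ6 : ∀ A : Set ℂ, ξ (convexHull ℝ A) = ξ A)
    (Ω : Set (BoundedContinuousFunction T ℂ) → ℝ≥0∞)
    (hΩ : ∀ ℱ : Set (BoundedContinuousFunction T ℂ),
      Ω ℱ = omegaMeasure hat ℱ +
        ⨆ t : T, ξ ((fun f : BoundedContinuousFunction T ℂ => f t) '' ℱ)) :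
    (∀ ℱ : Set (BoundedContinuousFunction T ℂ), Ω ℱ = 0 ↔ IsCompact (closure ℱ)) ∧
    (∀ ℱ 𝒢 : Set (BoundedContinuousFunction T ℂ), ℱ ⊆ 𝒢 → Ω ℱ ≤ Ω 𝒢) ∧
    (∀ ℱ : Set (BoundedContinuousFunction T ℂ), Ω (closure ℱ) = Ω ℱ) ∧
    (∀ (l : ℂ) (ℱ : Set (BoundedContinuousFunction T ℂ)),
      Ω (l • ℱ) = (‖l‖₊ : ℝ≥0∞) * Ω ℱ) ∧
    (∀ ℱ 𝒢 : Set (BoundedContinuousFunction T ℂ), 𝒢.Finite → Disjoint ℱ 𝒢 →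
      Ω (ℱ ∪ 𝒢) = Ω ℱ) ∧
    (∀ ℱ : Set (BoundedContinuousFunction T ℂ), Ω (convexHull ℝ ℱ) = Ω ℱ) := by
  refine ⟨?_, ?_, ?_, ?_, ?_, ?_⟩
  · -- (MN1)
    intro ℱ
    rw [hΩ ℱ, add_eq_zero]
    simp only [omegaMeasure, iSup_eq_zero]
    constructor
    · rintro ⟨hω, hη⟩
      exact TotallyBounded.isCompact_of_isClosed
        (totallyBounded_of_zero hhat hω (fun t => (hξ1 _).1 (hη t))).closure isClosed_closure
    · intro hc
      refine ⟨fun u => omegaU_eq_zero_of_compact hhat hc u, fun t => (hξ1 _).2 ?_⟩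
      exact IsCompact.of_isClosed_subset
        (hc.image (BoundedContinuousFunction.lipschitz_eval_const t).continuous) isClosed_closure
        (closure_minimal (Set.image_mono subset_closure)
          (hc.image (BoundedContinuousFunction.lipschitz_eval_const t).continuous).isClosed)
  · -- (MN2)
    intro ℱ 𝒢 h
    rw [hΩ, hΩ]
    exact add_le_add (omegaMeasure_mono h) (iSup_mono fun t => hξ2 _ _ (Set.image_mono h))
  · -- (MN3)
    intro ℱ
    rw [hΩ, hΩ]
    congr 1
    · simp only [omegaMeasure, omegaU, omegaUW_closure hhat]
    · refine iSup_congr fun t => le_antisymm ?_ (hξ2 _ _ (Set.image_mono subset_closure))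
      calc ξ ((fun f : BoundedContinuousFunction T ℂ => f t) '' closure ℱ)
          ≤ ξ (closure ((fun f : BoundedContinuousFunction T ℂ => f t) '' ℱ)) :=
            hξ2 _ _ (image_closure_subset_closure_image
              (BoundedContinuousFunction.lipschitz_eval_const t).continuous)
        _ = _ := hξ3 _
  · -- (MN4)
    intro l ℱ
    rw [hΩ, hΩ, mul_add]
    congr 1
    · exact omegaMeasure_smul hhat l ℱ
    · have himg : ∀ t : T, (fun f : BoundedContinuousFunction T ℂ => f t) '' (l • ℱ) =
          l • ((fun f : BoundedContinuousFunction T ℂ => f t) '' ℱ) := by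
        intro t
        rw [← Set.image_smul, ← Set.image_smul, Set.image_image, Set.image_image]
        simp
      rw [ENNReal.mul_iSup]
      exact iSup_congr fun t => by rw [himg t, hξ4]
  · -- (MN5)
    intro ℱ 𝒢 hfin _
    rw [hΩ, hΩ]
    congr 1
    · simp only [omegaMeasure]
      exact iSup_congr fun u => omegaU_union hhat hfin u
    · refine iSup_congr fun t => ?_
      rw [Set.image_union, ← Set.union_diff_self,
        hξ5 _ _ ((hfin.image _).subset Set.diff_subset) disjoint_sdiff_self_right]
  · -- (MN6)
    intro ℱ
    rw [hΩ, hΩ]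
    congr 1
    · simp only [omegaMeasure, omegaU, omegaUW_convexHull hhat]
    · refine iSup_congr fun t => ?_
      set e : BoundedContinuousFunction T ℂ →ₗ[ℝ] ℂ :=
        { toFun := fun f => f t
          map_add' := fun f g => by simp
          map_smul' := fun r f => by simp } with he
      have himg : (fun f : BoundedContinuousFunction T ℂ => f t) '' (convexHull ℝ ℱ) =
          convexHull ℝ ((fun f : BoundedContinuousFunction T ℂ => f t) '' ℱ) :=
        e.image_convexHull ℱ
      rw [himg, hξ6]
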